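/- Let d_β(1) = t_1 t_2 ⋯ t_{m-1} 1 satisfy the Parry condition, and suppose the prefix p p' q of t_1⋯t_{m−1} = p^r p' q (in the factorization d_β(1) = p^r p' q p 1 with p' a proper prefix of p and q_1 < p_{|p'|+1}) appears. If the word t_1⋯t_{m−1} has prefix p w' p p w' p for some word w' with p w' p a border configuration, then the Parry condition forces p w' = w' p. -/

import Mathlib

private lemma lex_of_append {r : ℕ → ℕ → Prop} :
    ∀ (u v s t : List ℕ), u.length = v.length →
    List.Lex r (u ++ s) (v ++ t) → List.Lex r u v ∨ u = v := by
  intro u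
  induction u with
  | nil => intro v s t hl _; right; cases v with
    | nil => rfl
    | cons b v => simp at hl
  | cons a u ih =>
    intro v s t hl h
    cases v with
    | nil => simp at hl
    | cons b v =>
      simp only [List.cons_append] at h
      cases h with
      | rel hr => exact Or.inl (List.Lex.rel hr)
      | cons h' =>
        simp only [List.length_cons, Nat.succ_inj] at hl
        rcases ih v s t hl h' with h'' | h''
        · exact Or.inl (List.Lex.cons h'')
        · right; rw [h'']

private lemma lex_cancel_left :
    ∀ (l u v : List ℕ), List.Lex (· < ·) (l ++ u) (l ++ v) → List.Lex (· < ·) u v := by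
  intro l
  induction l with
  | nil => intro u v h; exact h
  | cons a l ih =>
    intro u v h
    simp only [List.cons_append] at h
    cases h with
    | rel hr => exact absurd hr (lt_irrefl a)
    | cons h' => exact ih u v h'

private lemma lex_asymm :
    ∀ (u v : List ℕ), List.Lex (· < ·) u v → List.Lex (· < ·) v u → False := by
  intro u
  induction u with
  | nil => intro v h1 h2; cases h2
  | cons a u ih =>
    intro v h1 h2
    cases v with
    | nil => cases h1
    | cons b v =>
      cases h1 with
      | rel hr1 =>
        cases h2 with
        | rel hr2 => exact absurd (hr1.trans hr2) (lt_irrefl a)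
        | cons h2' => exact absurd hr1 (lt_irrefl a)
      | cons h1' =>
        cases h2 with
        | rel hr2 => exact absurd hr2 (lt_irrefl a)
        | cons h2' => exact ih v h1' h2'

/-- If `d_β(1) = t_1⋯t_{m−1}1` satisfies the Parry condition and `t_1⋯t_{m−1}`
has the prefix `p w' p p w' p`, then the Parry condition forces `p w' = w' p`. -/
theorem stmt_19 (T : List ℕ) (D : List ℕ) (hD : D = T ++ [1])
    (hParry : ∀ i : ℕ, 1 ≤ i → i < D.length → List.Lex (· < ·) (D.drop i) D)
    (p w' : List ℕ)
    (hpref : (p ++ w' ++ p ++ p ++ w' ++ p) <+: T) :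
    p ++ w' = w' ++ p := by
  by_cases hp : p = []
  · simp [hp]
  have ha : 1 ≤ p.length := List.length_pos_iff.mpr hp
  obtain ⟨z, hz⟩ := hpref
  have hDeq : D = p ++ (w' ++ (p ++ (p ++ (w' ++ (p ++ (z ++ [1])))))) := by
    rw [hD, ← hz]; simp [List.append_assoc]
  have hlen : p.length < D.length ∧ p.length + w'.length < D.length := by
    rw [hDeq]; simp [List.length_append]
  -- First inequality: drop |p|
  have h1 := hParry p.length ha hlen.1
  have h2 := hParry (p.length + w'.length) (le_trans ha (Nat.le_add_right _ _)) hlen.2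
  rw [hDeq, List.drop_left] at h1
  rw [hDeq, show p.length + w'.length = (p ++ w').length by simp,
    show p ++ (w' ++ (p ++ (p ++ (w' ++ (p ++ (z ++ [1])))))) =
      (p ++ w') ++ (p ++ (p ++ (w' ++ (p ++ (z ++ [1]))))) by simp [List.append_assoc],
    List.drop_left] at h2
  have hx := lex_of_append (w' ++ p) (p ++ w') (p ++ (w' ++ (p ++ (z ++ [1]))))
    (p ++ (p ++ (w' ++ (p ++ (z ++ [1]))))) (by simp; omega)
    (by simp only [List.append_assoc] at h1 ⊢; exact h1)
  have hy := lex_of_append (p ++ (p ++ w')) (p ++ (w' ++ p)) (p ++ (z ++ [1]))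
    (p ++ (w' ++ (p ++ (z ++ [1])))) (by simp; omega)
    (by simp only [List.append_assoc] at h2 ⊢; exact h2)
  rcases hx with hx | hx
  · rcases hy with hy | hy
    · exact absurd hx (fun h => lex_asymm _ _ h (lex_cancel_left p _ _ hy))
    · exact (List.append_cancel_left hy).symm ▸ rfl
  · exact hx.symm
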